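/- Every element of K maps each coset of Z to a coset of Z, so K acts on the quotient group G/Z; this action is faithful (only the identity of K induces the identity map on G/Z) and transitive on the set of nonidentity elements of G/Z. -/

import Mathlib

/-- The Heisenberg group `H₃(F)` of upper unitriangular 3×3 matrices over `F`,
recorded by the three free entries: `x` in position (1,2), `y` in position (2,3),
`z` in position (1,3). -/
@[ext]
structure Heis (F : Type*) where
  x : F
  y : F
  z : F
deriving DecidableEq

namespace Heis

variable {F : Type*} [Field F]

/-- Multiplication corresponding to the matrix product. -/
instance : Group (Heis F) where
  mul a b := ⟨a.x + b.x, a.y + b.y, a.z + b.z + a.x * b.y⟩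
  one := ⟨0, 0, 0⟩
  inv a := ⟨-a.x, -a.y, -a.z + a.x * a.y⟩
  mul_assoc a b c := Heis.ext
    (show a.x + b.x + c.x = a.x + (b.x + c.x) by ring)
    (show a.y + b.y + c.y = a.y + (b.y + c.y) by ring)
    (show a.z + b.z + a.x * b.y + c.z + (a.x + b.x) * c.y
        = a.z + (b.z + c.z + b.x * c.y) + a.x * (b.y + c.y) by ring)
  one_mul a := Heis.ext
    (show (0 : F) + a.x = a.x by ring)
    (show (0 : F) + a.y = a.y by ring)
    (show (0 : F) + a.z + 0 * a.y = a.z by ring)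
  mul_one a := Heis.ext
    (show a.x + 0 = a.x by ring)
    (show a.y + 0 = a.y by ring)
    (show a.z + 0 + a.x * 0 = a.z by ring)
  inv_mul_cancel a := Heis.ext
    (show -a.x + a.x = 0 by ring)
    (show -a.y + a.y = 0 by ring)
    (show -a.z + a.x * a.y + a.z + -a.x * a.y = 0 by ring)

instance [Fintype F] : Fintype (Heis F) :=
  Fintype.ofEquiv (F × F × F)
    ⟨fun p => ⟨p.1, p.2.1, p.2.2⟩, fun a => (a.x, a.y, a.z), fun _ => rfl, fun _ => rfl⟩

end Heis

/-- The element `g(x,y,z)` of the Heisenberg group. -/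
def gElt {F : Type*} (x y z : F) : Heis F := ⟨x, y, z⟩

/-- The center `Z = {g(0,0,z) : z ∈ F}` of the Heisenberg group, as a set. -/
def Zset (F : Type*) [Field F] : Set (Heis F) := {g : Heis F | g.x = 0 ∧ g.y = 0}

/-- The center `Z` as a subgroup of the Heisenberg group. -/
def Zsub (F : Type*) [Field F] : Subgroup (Heis F) where
  carrier := Zset F
  mul_mem' := fun {a b} ha hb =>
    ⟨show a.x + b.x = 0 by rw [ha.1, hb.1, add_zero],
     show a.y + b.y = 0 by rw [ha.2, hb.2, add_zero]⟩
  one_mem' := ⟨rfl, rfl⟩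
  inv_mem' := fun {a} ha =>
    ⟨show -a.x = 0 by rw [ha.1, neg_zero],
     show -a.y = 0 by rw [ha.2, neg_zero]⟩

/-- `γ_i(α,β) = αβ/2 + (α² − εβ²)i`. -/
def gam {F : Type*} [Field F] (ε i α β : F) : F := α * β / 2 + (α ^ 2 - ε * β ^ 2) * i

/-- `Y_i = {g(α, β, γ_i(α,β)) : (α,β) ≠ (0,0)}`. -/
def Yset {F : Type*} [Field F] (ε i : F) : Set (Heis F) :=
  {g : Heis F | ∃ α β : F, (α, β) ≠ (0, 0) ∧ g = gElt α β (gam ε i α β)}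

/-- `X_i = Y_i ∪ {e}`. -/
def Xset {F : Type*} [Field F] (ε i : F) : Set (Heis F) := Yset ε i ∪ {1}

/-- The map `ρ(M) : G → G` attached to the matrix `M = [[α,β],[εβ,α]]`. -/
def rho {F : Type*} [Field F] (ε α β : F) : Heis F → Heis F := fun g =>
  gElt (α * g.x + ε * β * g.y) (β * g.x + α * g.y)
    (α * β * (g.x ^ 2 / 2 + ε * g.y ^ 2 / 2) + ε * β ^ 2 * g.x * g.y
      + (α ^ 2 - ε * β ^ 2) * g.z)

/-- `K = {ρ(M) : M = [[α,β],[εβ,α]], (α,β) ≠ (0,0)}`, as a set of maps `G → G`. -/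
def Kset {F : Type*} [Field F] (ε : F) : Set (Heis F → Heis F) :=
  {f | ∃ α β : F, (α, β) ≠ (0, 0) ∧ f = rho ε α β}

/-- The family of sets `{e}`, `Z \ {e}`, `Y_i` for `i ∈ F`. -/
def SFam {F : Type*} [Field F] (ε : F) : Set (Set (Heis F)) :=
  insert {1} (insert (Zset F \ {1}) {S | ∃ i : F, S = Yset ε i})

/-- `f` preserves each of the basic sets `{e}`, `Z \ {e}`, `Y_i`:
`hg⁻¹ ∈ S ↔ f(h)f(g)⁻¹ ∈ S`. -/
def Preserves {F : Type*} [Field F] (ε : F) (f : Heis F → Heis F) : Prop :=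
  ∀ S ∈ SFam ε, ∀ g h : Heis F, h * g⁻¹ ∈ S ↔ f h * (f g)⁻¹ ∈ S

/-- The set of permutations of `G` of the form `x ↦ σ(x)·c` with `σ ∈ K`, `c ∈ G`. -/
def Aset {F : Type*} [Field F] (ε : F) : Set (Equiv.Perm (Heis F)) :=
  {f | ∃ σ ∈ Kset ε, ∃ c : Heis F, ∀ x : Heis F, f x = σ x * c}

/-- The operation `ψ` on `F ∪ {∞}`, with `∞` encoded as `none`. -/
def psi {F : Type*} [Field F] [DecidableEq F] (ε : F) : Option F → Option F → Option F
  | none, j => j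
  | some i, none => some i
  | some i, some j => if i + j = 0 then none else some ((i * j + ε / 16) / (i + j))

/-- `Y_k` for `k ∈ F ∪ {∞}`, where `Y_∞ = Z \ {e}`. -/
def YInf {F : Type*} [Field F] (ε : F) : Option F → Set (Heis F)
  | some i => Yset ε i
  | none => Zset F \ {1}

lemma Heis.mul_def' {F : Type*} [Field F] (a b : Heis F) :
    a * b = ⟨a.x + b.x, a.y + b.y, a.z + b.z + a.x * b.y⟩ := rfl

lemma Heis.inv_def' {F : Type*} [Field F] (a : Heis F) :
    a⁻¹ = ⟨-a.x, -a.y, -a.z + a.x * a.y⟩ := rfl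

lemma mem_Zsub_iff {F : Type*} [Field F] (g : Heis F) :
    g ∈ Zsub F ↔ g.x = 0 ∧ g.y = 0 := Iff.rfl

lemma nonsq_key {F : Type*} [Field F] {ε : F} (hε : ¬IsSquare ε) {a b : F}
    (h : a ^ 2 - ε * b ^ 2 = 0) : a = 0 ∧ b = 0 := by
  rcases eq_or_ne b 0 with hb | hb
  · refine ⟨?_, hb⟩
    have h2 : a ^ 2 = 0 := by rw [hb] at h; linear_combination h
    exact pow_eq_zero_iff (two_ne_zero) |>.mp h2
  · refine absurd ⟨a / b, ?_⟩ hε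
    field_simp
    linear_combination -h

lemma det_ne {F : Type*} [Field F] {ε : F} (hε : ¬IsSquare ε) {a b : F}
    (hab : (a, b) ≠ (0, 0)) : a ^ 2 - ε * b ^ 2 ≠ 0 := fun h => by
  obtain ⟨h1, h2⟩ := nonsq_key hε h
  exact hab (by rw [h1, h2])

/-- Every element of `K` maps each coset of `Z` to a coset of `Z`, so `K`
acts on `G/Z`; this action is faithful (only the identity of `K` induces the identity on
`G/Z`) and transitive on the set of nonidentity elements of `G/Z`. -/
theorem statement_14 {F : Type*} [Field F] [Fintype F]
    (hodd : Odd (Fintype.card F)) (ε : F) (hε : ¬IsSquare ε) :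
    (∀ σ ∈ Kset ε, ∀ g : Heis F,
      σ '' ((fun z => z * g) '' (Zsub F : Set (Heis F)))
        = (fun z => z * σ g) '' (Zsub F : Set (Heis F))) ∧
    (∀ σ ∈ Kset ε,
      (∀ g : Heis F, (QuotientGroup.mk (σ g) : Heis F ⧸ Zsub F) = QuotientGroup.mk g) →
      σ = id) ∧
    (∀ g h : Heis F, g ∉ Zsub F → h ∉ Zsub F →
      ∃ σ ∈ Kset ε, (QuotientGroup.mk (σ g) : Heis F ⧸ Zsub F) = QuotientGroup.mk h) := by
  
  refine ⟨?_, ?_, ?_⟩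
  · rintro σ ⟨α, β, hab, rfl⟩ g
    have hD : α ^ 2 - ε * β ^ 2 ≠ 0 := det_ne hε hab
    ext w
    simp only [Set.mem_image, SetLike.mem_coe, mem_Zsub_iff]
    constructor
    · rintro ⟨_, ⟨z, ⟨hz1, hz2⟩, rfl⟩, rfl⟩
      refine ⟨⟨0, 0, (α ^ 2 - ε * β ^ 2) * z.z⟩, ⟨rfl, rfl⟩, ?_⟩
      simp only [Heis.mul_def', rho, gElt, hz1, hz2]
      exact Heis.ext (by ring) (by ring) (by ring)
    · rintro ⟨z, ⟨hz1, hz2⟩, rfl⟩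
      refine ⟨⟨0, 0, z.z / (α ^ 2 - ε * β ^ 2)⟩ * g,
        ⟨⟨0, 0, z.z / (α ^ 2 - ε * β ^ 2)⟩, ⟨rfl, rfl⟩, rfl⟩, ?_⟩
      simp only [Heis.mul_def', rho, gElt, hz1, hz2]
      refine Heis.ext (by ring) (by ring) ?_
      show α * β * ((0 + g.x) ^ 2 / 2 + ε * (0 + g.y) ^ 2 / 2)
          + ε * β ^ 2 * (0 + g.x) * (0 + g.y)
          + (α ^ 2 - ε * β ^ 2) * (z.z / (α ^ 2 - ε * β ^ 2) + g.z + 0 * g.y) = _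
      have hzD : (α ^ 2 - ε * β ^ 2) * (z.z / (α ^ 2 - ε * β ^ 2)) = z.z := by field_simp
      linear_combination hzD
  · rintro σ ⟨α, β, hab, rfl⟩ h
    have h1 := (QuotientGroup.eq (s := Zsub F)).mp (h ⟨1, 0, 0⟩)
    rw [mem_Zsub_iff] at h1
    simp only [Heis.mul_def', Heis.inv_def', rho, gElt] at h1
    have hα : α = 1 := by linear_combination -h1.1
    have hβ : β = 0 := by linear_combination -h1.2
    subst hα hβ
    funext g
    simp only [rho, gElt, id_eq]
    exact Heis.ext (by ring) (by ring) (by ring)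
  · intro g h hg hh
    rw [mem_Zsub_iff] at hg hh
    have hgxy : (g.x, g.y) ≠ (0, 0) := fun hc =>
      hg ⟨congrArg Prod.fst hc, congrArg Prod.snd hc⟩
    have hd : g.x ^ 2 - ε * g.y ^ 2 ≠ 0 := det_ne hε hgxy
    set d := g.x ^ 2 - ε * g.y ^ 2 with hdd
    set α := (g.x * h.x - ε * g.y * h.y) / d with hαd
    set β := (g.x * h.y - g.y * h.x) / d with hβd
    have e1 : α * g.x + ε * β * g.y = h.x := by
      rw [hαd, hβd]; field_simp; ring
    have e2 : β * g.x + α * g.y = h.y := by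
      rw [hαd, hβd]; field_simp; ring
    have hab : (α, β) ≠ (0, 0) := by
      intro hc
      have hα0 : α = 0 := congrArg Prod.fst hc
      have hβ0 : β = 0 := congrArg Prod.snd hc
      apply hh
      constructor
      · rw [← e1, hα0, hβ0]; ring
      · rw [← e2, hα0, hβ0]; ring
    refine ⟨rho ε α β, ⟨α, β, hab, rfl⟩, ?_⟩
    rw [QuotientGroup.eq (s := Zsub F), mem_Zsub_iff]
    simp only [Heis.mul_def', Heis.inv_def', rho, gElt]
    constructor
    · show -(α * g.x + ε * β * g.y) + h.x = 0
      rw [e1]; ring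
    · show -(β * g.x + α * g.y) + h.y = 0
      rw [e2]; ring
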